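/- Let r > 1 and let T be an invertible bounded linear operator on a complex Hilbert space H with ‖T‖ ≤ r and ‖T⁻¹‖ ≤ r. Let P = (T*T)^{1/2} be the positive square root of T*T and let D = β_r(T)^{1/2} be the positive square root of β_r(T) = (r² + r⁻²)·I − T*T − (T*T)⁻¹ (which is a positive operator). Define the operator T̂ on H ⊕ H by T̂(x, y) = (T x + T P⁻¹ D y, (T*)⁻¹ y). Then: (i) T̂ is invertible with T̂⁻¹(x, y) = (T⁻¹ x − D P⁻¹ T* y, T* y); (ii) β_r(T̂) = (r² + r⁻²)·I − T̂*T̂ − (T̂*T̂)⁻¹ = 0, i.e. T̂ is a quantum annulus unitary; and (iii) for every integer n ∈ ℤ, T̂ⁿ(x, 0) = (Tⁿ x, 0), so that T̂ is an extension (and hence a dilation) of T: Tⁿ = P_H T̂ⁿ|_H for all n ∈ ℤ. -/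

import Mathlib

set_option synthInstance.maxHeartbeats 1000000
set_option maxHeartbeats 1000000
set_option linter.unusedSectionVars false
set_option linter.unusedVariables false

open ContinuousLinearMap

noncomputable section QAEDaux

variable {H : Type*} [NormedAddCommGroup H] [InnerProductSpace ℂ H] [CompleteSpace H]

/-- Block operator on `H ⊕₂ H`. -/
def QAEDblk (A B C D : H →L[ℂ] H) : WithLp 2 (H × H) →L[ℂ] WithLp 2 (H × H) :=
  ((WithLp.prodContinuousLinearEquiv 2 ℂ H H).symm :
      (H × H) →L[ℂ] WithLp 2 (H × H)).comp
    ((((A.comp (ContinuousLinearMap.fst ℂ H H)) + B.comp (ContinuousLinearMap.snd ℂ H H)).prod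
      ((C.comp (ContinuousLinearMap.fst ℂ H H)) + D.comp (ContinuousLinearMap.snd ℂ H H))).comp
      ((WithLp.prodContinuousLinearEquiv 2 ℂ H H) : WithLp 2 (H × H) →L[ℂ] (H × H)))

lemma QAEDblk_apply (A B C D : H →L[ℂ] H) (x y : H) :
    QAEDblk A B C D ((WithLp.equiv 2 (H × H)).symm (x, y)) =
      (WithLp.equiv 2 (H × H)).symm (A x + B y, C x + D y) := rfl

lemma QAED_ext {f g : WithLp 2 (H × H) →L[ℂ] WithLp 2 (H × H)}
    (h : ∀ x y : H, f ((WithLp.equiv 2 (H × H)).symm (x, y)) =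
      g ((WithLp.equiv 2 (H × H)).symm (x, y))) : f = g := by
  ext v
  have := h ((WithLp.equiv 2 (H × H)) v).1 ((WithLp.equiv 2 (H × H)) v).2
  rwa [Prod.mk.eta, Equiv.symm_apply_apply] at this

lemma QAEDblk_mul (A B C D A' B' C' D' : H →L[ℂ] H) :
    QAEDblk A B C D * QAEDblk A' B' C' D' =
      QAEDblk (A * A' + B * C') (A * B' + B * D') (C * A' + D * C') (C * B' + D * D') := by
  refine QAED_ext fun x y => ?_
  simp only [ContinuousLinearMap.mul_apply, QAEDblk_apply, ContinuousLinearMap.add_apply,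
    ContinuousLinearMap.mul_apply, map_add]
  congr 1
  refine Prod.ext ?_ ?_ <;> simp <;> abel

lemma QAEDblk_one : QAEDblk (1 : H →L[ℂ] H) 0 0 1 = 1 := by
  refine QAED_ext fun x y => ?_
  rw [QAEDblk_apply]; simp

lemma QAEDblk_zero : QAEDblk (0 : H →L[ℂ] H) 0 0 0 = 0 := by
  refine QAED_ext fun x y => ?_
  rw [QAEDblk_apply]; simp

lemma QAEDblk_smul (c : ℂ) (A B C D : H →L[ℂ] H) :
    c • QAEDblk A B C D = QAEDblk (c • A) (c • B) (c • C) (c • D) := by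
  refine QAED_ext fun x y => ?_
  simp only [ContinuousLinearMap.smul_apply, QAEDblk_apply]
  simp only [ContinuousLinearMap.smul_apply, QAEDblk_apply, ContinuousLinearMap.smul_apply,
    WithLp.equiv_symm_apply, ← WithLp.toLp_smul, Prod.smul_mk, smul_add]

lemma QAEDblk_sub (A B C D A' B' C' D' : H →L[ℂ] H) :
    QAEDblk A B C D - QAEDblk A' B' C' D' =
      QAEDblk (A - A') (B - B') (C - C') (D - D') := by
  refine QAED_ext fun x y => ?_
  simp only [ContinuousLinearMap.sub_apply, QAEDblk_apply]
  simp only [ContinuousLinearMap.sub_apply, QAEDblk_apply, ContinuousLinearMap.sub_apply,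
    WithLp.equiv_symm_apply, ← WithLp.toLp_sub, Prod.mk_sub_mk]
  congr 1
  refine Prod.ext ?_ ?_ <;> simp <;> abel

lemma QAEDblk_adjoint (A B C D : H →L[ℂ] H) :
    adjoint (QAEDblk A B C D) = QAEDblk (adjoint A) (adjoint C) (adjoint B) (adjoint D) := by
  symm
  rw [eq_adjoint_iff]
  intro u v
  rw [← (WithLp.equiv 2 (H × H)).symm_apply_apply u, ← (WithLp.equiv 2 (H × H)).symm_apply_apply v]
  obtain ⟨u1, u2⟩ := (WithLp.equiv 2 (H × H)) u
  obtain ⟨v1, v2⟩ := (WithLp.equiv 2 (H × H)) v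
  simp only [QAEDblk_apply]
  simp only [QAEDblk_apply, WithLp.prod_inner_apply, WithLp.equiv_symm_apply, WithLp.ofLp_toLp,
    inner_add_left, inner_add_right, adjoint_inner_left]
  ring

lemma QAED_commute_mem_elemental {A : Type*} [CStarAlgebra A] {a b y : A}
    (h : Commute b a) (h' : Commute b (star a))
    (hy : y ∈ StarAlgebra.elemental ℂ a) : Commute b y := by
  induction hy using StarAlgebra.elemental.induction_on with
  | self => exact h
  | star_self => exact h'
  | algebraMap r => exact (Algebra.commutes r b).symm
  | add u hu v hv hbu hbv => exact hbu.add_right hbv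
  | mul u hu v hv hbu hbv => exact hbu.mul_right hbv
  | closure s hs hcomm v hv =>
    have hcl : IsClosed {x : A | Commute b x} :=
      isClosed_eq (continuous_mul_left b) (continuous_mul_right b)
    exact closure_minimal (fun u hu => hcomm u hu) hcl hv

lemma QAED_commute_cfc {A : Type*} [CStarAlgebra A] {a b : A} (ha : IsStarNormal a)
    (h : Commute b a) (h' : Commute b (star a)) (f : ℂ → ℂ) : Commute b (cfc f a) := by
  refine QAED_commute_mem_elemental h h' ?_
  by_cases hf : ContinuousOn f (spectrum ℂ a)
  · rw [cfc_apply f a ha hf, cfcHom_eq_of_isStarNormal]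
    simp only [StarAlgHom.comp_apply, StarAlgHom.coe_coe, StarSubalgebra.coe_subtype]
    exact SetLike.coe_mem _
  · rw [cfc_apply_of_not_continuousOn a hf]
    exact zero_mem _

lemma QAED_commute_sqrt {A : Type*} [CStarAlgebra A] [PartialOrder A] [StarOrderedRing A]
    {a b : A} (ha : 0 ≤ a) (h : Commute b a) : Commute b (CFC.sqrt a) := by
  have hsa : IsSelfAdjoint a := IsSelfAdjoint.of_nonneg ha
  rw [CFC.sqrt_eq_cfc (a := a), cfc_nnreal_eq_real _ a ha, cfc_real_eq_complex _ hsa]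
  exact QAED_commute_cfc hsa.isStarNormal h (hsa.star_eq.symm ▸ h) _

end QAEDaux

open ContinuousLinearMap in
theorem quantum_annulus_explicit_dilation
    {H : Type*} [NormedAddCommGroup H] [InnerProductSpace ℂ H] [CompleteSpace H]
    (r : ℝ) (hr : 1 < r) (T : (H →L[ℂ] H)ˣ)
    (hT : ‖(T : H →L[ℂ] H)‖ ≤ r)
    (hTinv : ‖((T⁻¹ : (H →L[ℂ] H)ˣ) : H →L[ℂ] H)‖ ≤ r)
    (P Pinv D : H →L[ℂ] H)
    (hP : 0 ≤ P) (hP2 : P * P = adjoint (T : H →L[ℂ] H) * (T : H →L[ℂ] H))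
    (hPinv : P * Pinv = 1) (hPinv' : Pinv * P = 1)
    (hD : 0 ≤ D)
    (hD2 : D * D = ((r ^ 2 + r⁻¹ ^ 2 : ℝ) : ℂ) • (1 : H →L[ℂ] H)
      - adjoint (T : H →L[ℂ] H) * (T : H →L[ℂ] H)
      - ((T⁻¹ : (H →L[ℂ] H)ˣ) : H →L[ℂ] H) *
          adjoint ((T⁻¹ : (H →L[ℂ] H)ˣ) : H →L[ℂ] H))
    (That Thatinv : WithLp 2 (H × H) →L[ℂ] WithLp 2 (H × H))
    (hThat : ∀ x y : H,
      That ((WithLp.equiv 2 (H × H)).symm (x, y)) =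
        (WithLp.equiv 2 (H × H)).symm
          ((T : H →L[ℂ] H) x + ((T : H →L[ℂ] H) * Pinv * D) y,
            adjoint ((T⁻¹ : (H →L[ℂ] H)ˣ) : H →L[ℂ] H) y))
    (hThatinv : ∀ x y : H,
      Thatinv ((WithLp.equiv 2 (H × H)).symm (x, y)) =
        (WithLp.equiv 2 (H × H)).symm
          (((T⁻¹ : (H →L[ℂ] H)ˣ) : H →L[ℂ] H) x
              - (D * Pinv * adjoint (T : H →L[ℂ] H)) y,
            adjoint (T : H →L[ℂ] H) y)) :
    -- (i) `T̂` is invertible with inverse `T̂inv`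
    That * Thatinv = 1 ∧ Thatinv * That = 1 ∧
    -- (ii) `β_r(T̂) = 0`: `T̂` is a quantum annulus unitary
    ((r ^ 2 + r⁻¹ ^ 2 : ℝ) : ℂ) • (1 : WithLp 2 (H × H) →L[ℂ] WithLp 2 (H × H))
        - adjoint That * That - Thatinv * adjoint Thatinv = 0 ∧
    -- (iii) `T̂ⁿ (x,0) = (Tⁿ x, 0)` for all `n : ℤ`
    ∃ U : (WithLp 2 (H × H) →L[ℂ] WithLp 2 (H × H))ˣ,
      (U : WithLp 2 (H × H) →L[ℂ] WithLp 2 (H × H)) = That ∧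
      ∀ (n : ℤ) (x : H),
        ((U ^ n : (WithLp 2 (H × H) →L[ℂ] WithLp 2 (H × H))ˣ) :
            WithLp 2 (H × H) →L[ℂ] WithLp 2 (H × H))
          ((WithLp.equiv 2 (H × H)).symm (x, 0)) =
        (WithLp.equiv 2 (H × H)).symm (((T ^ n : (H →L[ℂ] H)ˣ) : H →L[ℂ] H) x, 0) := by
  set c : ℂ := ((r ^ 2 + r⁻¹ ^ 2 : ℝ) : ℂ) with hc
  set t : H →L[ℂ] H := (T : H →L[ℂ] H) with ht_def
  set s : H →L[ℂ] H := ((T⁻¹ : (H →L[ℂ] H)ˣ) : H →L[ℂ] H) with hs_def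
  have hts : t * s = 1 := T.mul_inv
  have hst : s * t = 1 := T.inv_mul
  -- self-adjointness
  have sP : star P = P := (IsSelfAdjoint.of_nonneg hP).star_eq
  have sD : star D = D := (IsSelfAdjoint.of_nonneg hD).star_eq
  have sPinv : star Pinv = Pinv := by
    have h1 : star Pinv * P = 1 := by
      have := congrArg star hPinv
      rwa [star_mul, sP, star_one] at this
    calc star Pinv = star Pinv * (P * Pinv) := by rw [hPinv, mul_one]
      _ = (star Pinv * P) * Pinv := by rw [mul_assoc]
      _ = Pinv := by rw [h1, one_mul]
  -- adjoint facts
  have hadj_st : adjoint s * adjoint t = 1 := by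
    rw [← star_eq_adjoint, ← star_eq_adjoint, ← star_mul, hts, star_one]
  have hadj_ts : adjoint t * adjoint s = 1 := by
    rw [← star_eq_adjoint, ← star_eq_adjoint, ← star_mul, hst, star_one]
  -- word rewriters
  have W1 : ∀ X : H →L[ℂ] H, Pinv * (P * X) = X := fun X => by
    rw [← mul_assoc, hPinv', one_mul]
  have W2 : ∀ X : H →L[ℂ] H, P * (Pinv * X) = X := fun X => by
    rw [← mul_assoc, hPinv, one_mul]
  have W3 : ∀ X : H →L[ℂ] H, t * (s * X) = X := fun X => by
    rw [← mul_assoc, hts, one_mul]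
  have W4 : ∀ X : H →L[ℂ] H, s * (t * X) = X := fun X => by
    rw [← mul_assoc, hst, one_mul]
  have W5 : ∀ X : H →L[ℂ] H, adjoint s * (adjoint t * X) = X := fun X => by
    rw [← mul_assoc, hadj_st, one_mul]
  have W6 : ∀ X : H →L[ℂ] H, adjoint t * (adjoint s * X) = X := fun X => by
    rw [← mul_assoc, hadj_ts, one_mul]
  have W7 : ∀ X : H →L[ℂ] H, adjoint t * (t * X) = P * (P * X) := fun X => by
    rw [← mul_assoc, ← hP2, mul_assoc]
  -- commutation of `D` with `P`, `Pinv`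
  have hPP0 : (0 : H →L[ℂ] H) ≤ P * P := by
    have := star_mul_self_nonneg P; rwa [sP] at this
  have hDD0 : (0 : H →L[ℂ] H) ≤ D * D := by
    have := star_mul_self_nonneg D; rwa [sD] at this
  have hcomm2 : Commute (P * P) (D * D) := by
    have c1 : (P * P) * (s * adjoint s) = 1 := by
      rw [hP2, mul_assoc, ← mul_assoc t s, hts, one_mul, hadj_ts]
    have c2 : (s * adjoint s) * (P * P) = 1 := by
      rw [hP2, mul_assoc, ← mul_assoc (adjoint s) (adjoint t), hadj_st, one_mul, hst]
    have hQ : Commute (P * P) (s * adjoint s) := by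
      unfold Commute SemiconjBy
      rw [c1, c2]
    rw [hD2, ← hP2]
    exact (((Commute.one_right (P * P)).smul_right c).sub_right
      (Commute.refl (P * P))).sub_right hQ
  have hPPD : Commute (P * P) D := by
    have := QAED_commute_sqrt hDD0 hcomm2
    rwa [CFC.sqrt_mul_self D hD] at this
  have hDP : Commute D P := by
    have := QAED_commute_sqrt hPP0 hPPD.symm
    rwa [CFC.sqrt_mul_self P hP] at this
  have hDPinv : Commute D Pinv := by
    exact Commute.units_inv_right (u := ⟨P, Pinv, hPinv, hPinv'⟩) hDP
  have W8 : ∀ X : H →L[ℂ] H, D * (Pinv * X) = Pinv * (D * X) := fun X => by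
    rw [← mul_assoc, hDPinv, mul_assoc]
  have W9 : ∀ X : H →L[ℂ] H, D * (P * X) = P * (D * X) := fun X => by
    rw [← mul_assoc, hDP, mul_assoc]
  -- block forms
  have hThatEq : That = QAEDblk t (t * Pinv * D) 0 (adjoint s) := by
    refine QAED_ext fun x y => ?_
    rw [hThat x y, QAEDblk_apply]
    simp
  have hThatinvEq : Thatinv = QAEDblk s (-(D * Pinv * adjoint t)) 0 (adjoint t) := by
    refine QAED_ext fun x y => ?_
    rw [hThatinv x y, QAEDblk_apply]
    simp [sub_eq_add_neg]
  have hadjThat : adjoint That = QAEDblk (adjoint t) 0 (D * Pinv * adjoint t) s := by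
    rw [hThatEq, QAEDblk_adjoint, adjoint_adjoint]
    congr 1
    · simp
    · rw [← star_eq_adjoint, star_mul, star_mul, sD, sPinv, ← star_eq_adjoint, mul_assoc]
  have hadjThatinv : adjoint Thatinv = QAEDblk (adjoint s) 0 (-(t * Pinv * D)) t := by
    rw [hThatinvEq, QAEDblk_adjoint, adjoint_adjoint]
    congr 1
    · simp
    · simp only [← star_eq_adjoint, star_neg, star_mul, star_star, sD, sPinv, mul_assoc]
  -- (i)
  have hTT' : That * Thatinv = 1 := by
    rw [hThatEq, hThatinvEq, QAEDblk_mul]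
    rw [show t * s + t * Pinv * D * 0 = 1 by rw [mul_zero, add_zero, hts]]
    rw [show t * -(D * Pinv * adjoint t) + t * Pinv * D * adjoint t = 0 by
      simp only [mul_neg, mul_assoc, W8]; rw [neg_add_cancel]]
    rw [show (0 : H →L[ℂ] H) * s + adjoint s * 0 = 0 by simp]
    rw [show (0 : H →L[ℂ] H) * -(D * Pinv * adjoint t) + adjoint s * adjoint t = 1 by
      rw [zero_mul, zero_add, hadj_st]]
    exact QAEDblk_one
  have hT'T : Thatinv * That = 1 := by
    rw [hThatEq, hThatinvEq, QAEDblk_mul]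
    rw [show s * t + -(D * Pinv * adjoint t) * 0 = 1 by rw [mul_zero, add_zero, hst]]
    rw [show s * (t * Pinv * D) + -(D * Pinv * adjoint t) * adjoint s = 0 by
      simp only [neg_mul, mul_assoc, W4, hadj_ts, mul_one, W8]; rw [add_neg_cancel]]
    rw [show (0 : H →L[ℂ] H) * t + adjoint t * 0 = 0 by simp]
    rw [show (0 : H →L[ℂ] H) * (t * Pinv * D) + adjoint t * adjoint s = 1 by
      rw [zero_mul, zero_add, hadj_ts]]
    exact QAEDblk_one
  refine ⟨hTT', hT'T, ?_, ?_⟩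
  -- (ii)
  · have hDDQ : D * D + s * adjoint s = c • 1 - P * P := by
      rw [hD2, ← hP2]
      abel
    have hAA : adjoint That * That =
        QAEDblk (P * P) (P * D) (P * D) (c • 1 - P * P) := by
      rw [hadjThat, hThatEq, QAEDblk_mul]
      rw [show adjoint t * t + (0 : H →L[ℂ] H) * 0 = P * P by
        rw [mul_zero, add_zero, ← hP2]]
      rw [show adjoint t * (t * Pinv * D) + (0 : H →L[ℂ] H) * adjoint s = P * D by
        simp only [zero_mul, add_zero, mul_assoc, W7, W2]]
      rw [show D * Pinv * adjoint t * t + s * 0 = P * D by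
        simp only [mul_zero, add_zero, mul_assoc, ← hP2, W1]; exact hDP.eq]
      rw [show D * Pinv * adjoint t * (t * Pinv * D) + s * adjoint s = c • 1 - P * P by
        simp only [mul_assoc, W7, W1, W2]; exact hDDQ]
    have hBB : Thatinv * adjoint Thatinv =
        QAEDblk (c • 1 - P * P) (-(P * D)) (-(P * D)) (P * P) := by
      rw [hadjThatinv, hThatinvEq, QAEDblk_mul]
      rw [show s * adjoint s + -(D * Pinv * adjoint t) * -(t * Pinv * D) = c • 1 - P * P by
        simp only [neg_mul_neg, mul_assoc, W7, W1, W2]; rw [add_comm]; exact hDDQ]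
      rw [show s * 0 + -(D * Pinv * adjoint t) * t = -(P * D) by
        simp only [mul_zero, zero_add, neg_mul, mul_assoc, ← hP2, W1]
        rw [hDP.eq]]
      rw [show (0 : H →L[ℂ] H) * adjoint s + adjoint t * -(t * Pinv * D) = -(P * D) by
        simp only [zero_mul, zero_add, mul_neg, mul_assoc, W7, W2]]
      rw [show (0 : H →L[ℂ] H) * 0 + adjoint t * t = P * P by
        rw [zero_mul, zero_add, ← hP2]]
    rw [hAA, hBB]
    rw [show c • (1 : WithLp 2 (H × H) →L[ℂ] WithLp 2 (H × H)) =
      QAEDblk (c • 1) 0 0 (c • 1) by rw [← QAEDblk_one, QAEDblk_smul, smul_zero]]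
    rw [QAEDblk_sub, QAEDblk_sub]
    rw [show c • (1 : H →L[ℂ] H) - P * P - (c • 1 - P * P) = 0 by abel]
    rw [show (0 : H →L[ℂ] H) - P * D - -(P * D) = 0 by abel]
    rw [show c • (1 : H →L[ℂ] H) - (c • 1 - P * P) - P * P = 0 by abel]
    exact QAEDblk_zero
  -- (iii)
  · refine ⟨⟨That, Thatinv, hTT', hT'T⟩, rfl, ?_⟩
    have hx0 : ∀ x : H, That ((WithLp.equiv 2 (H × H)).symm (x, 0)) =
        (WithLp.equiv 2 (H × H)).symm (t x, 0) := fun x => by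
      rw [hThat x 0]; simp
    have hx0' : ∀ x : H, Thatinv ((WithLp.equiv 2 (H × H)).symm (x, 0)) =
        (WithLp.equiv 2 (H × H)).symm (s x, 0) := fun x => by
      rw [hThatinv x 0]; simp
    intro n
    induction n using Int.induction_on with
    | zero =>
      intro x
      simp
    | succ n ih =>
      intro x
      rw [zpow_add_one, zpow_add_one, Units.val_mul, Units.val_mul,
        ContinuousLinearMap.mul_apply, ContinuousLinearMap.mul_apply]
      rw [show ((⟨That, Thatinv, hTT', hT'T⟩ :
        (WithLp 2 (H × H) →L[ℂ] WithLp 2 (H × H))ˣ) : WithLp 2 (H × H) →L[ℂ] WithLp 2 (H × H))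
        = That from rfl, hx0 x]
      exact ih (t x)
    | pred n ih =>
      intro x
      rw [zpow_sub_one, zpow_sub_one, Units.val_mul, Units.val_mul,
        ContinuousLinearMap.mul_apply, ContinuousLinearMap.mul_apply]
      rw [show ((((⟨That, Thatinv, hTT', hT'T⟩ :
        (WithLp 2 (H × H) →L[ℂ] WithLp 2 (H × H))ˣ))⁻¹ :
          (WithLp 2 (H × H) →L[ℂ] WithLp 2 (H × H))ˣ) :
          WithLp 2 (H × H) →L[ℂ] WithLp 2 (H × H)) = Thatinv from rfl, hx0' x]
      exact ih (s x)
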